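/- Let r > 1, κ > 0, λ₁ > 0, α ≥ (4λ₁/κ²)^{1/(r-1)}, β > 0. Then the improper integral ∫_α^∞ [λ₁α² + β² − λ₁ s² + (κ²/(2+2r))(s^{r+1} − α^{r+1})]^{-1/2} ds is finite. -/

import Mathlib

open MeasureTheory Set Real

set_option maxHeartbeats 1600000 in
/-- Finiteness of the blow-up time integral: for `r > 1`, `κ, λ₁, β > 0` and
`α ≥ (4λ₁/κ²)^{1/(r-1)}`, the improper integral
`∫_α^∞ [λ₁α² + β² − λ₁s² + (κ²/(2+2r))(s^{r+1} − α^{r+1})]^{−1/2} ds` is finite. -/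
theorem stmt_3 (α β lam κ r : ℝ)
    (hβ : 0 < β) (hlam : 0 < lam) (hκ : 0 < κ) (hr : 1 < r)
    (hαbig : α ≥ (4 * lam / κ ^ 2) ^ ((1:ℝ) / (r - 1))) :
    MeasureTheory.IntegrableOn
      (fun s : ℝ => (lam * α ^ 2 + β ^ 2 - lam * s ^ 2
        + κ ^ 2 / (2 + 2 * r) * (s ^ (r + 1) - α ^ (r + 1))) ^ (-(1/2) : ℝ))
      (Set.Ioi α) := by
  have hr1 : (0:ℝ) < r - 1 := by linarith
  have hκ2 : (0:ℝ) < κ ^ 2 := by positivity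
  have hden : (0:ℝ) < 2 + 2 * r := by linarith
  have hX : (0:ℝ) < 4 * lam / κ ^ 2 := by positivity
  have hα : 0 < α := lt_of_lt_of_le (Real.rpow_pos_of_pos hX _) hαbig
  set g : ℝ → ℝ := fun s => lam * α ^ 2 + β ^ 2 - lam * s ^ 2
        + κ ^ 2 / (2 + 2 * r) * (s ^ (r + 1) - α ^ (r + 1)) with hgdef
  -- auxiliary: squares and rpow
  have hsq : ∀ x : ℝ, 0 ≤ x → (x ^ 2) ^ ((r+1)/2 : ℝ) = x ^ (r+1) := by
    intro x hx
    rw [← Real.rpow_natCast x 2, ← Real.rpow_mul hx]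
    norm_num
    rw [show 2 * ((r+1)/2) = r+1 by ring]
  have hrpow_collapse : ∀ X : ℝ, 0 < X → ∀ s : ℝ, 0 ≤ s →
      X ^ ((1:ℝ)/(r-1)) ≤ s → X ≤ s ^ (r-1) := by
    intro X hXpos s hs hle
    have h := Real.rpow_le_rpow (Real.rpow_pos_of_pos hXpos _).le hle hr1.le
    rwa [← Real.rpow_mul hXpos.le, one_div_mul_cancel hr1.ne', Real.rpow_one] at h
  have hαpow : 4 * lam / κ ^ 2 ≤ α ^ (r - 1) :=
    hrpow_collapse _ hX α hα.le hαbig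
  have hexp : ∀ s : ℝ, 0 < s → s ^ (r+1) = s ^ (r-1) * s ^ 2 := by
    intro s hs
    rw [← Real.rpow_natCast s 2, ← Real.rpow_add hs]
    norm_num
    rw [show r - 1 + 2 = r+1 by ring]
  -- main lower bound: β² ≤ g s for α ≤ s
  have hg : ∀ s : ℝ, α ≤ s → β ^ 2 ≤ g s := by
    intro s hs
    have hs0 : 0 < s := lt_of_lt_of_le hα hs
    have hα2 : (0:ℝ) < α ^ 2 := by positivity
    have hs2 : α ^ 2 ≤ s ^ 2 := by nlinarith
    have hquot : (1:ℝ) ≤ s ^ 2 / α ^ 2 := (one_le_div hα2).mpr hs2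
    have hp : (1:ℝ) ≤ (r+1)/2 := by linarith
    have hb := one_add_mul_self_le_rpow_one_add
      (s := s ^ 2 / α ^ 2 - 1) (by linarith) hp
    rw [show (1:ℝ) + (s ^ 2 / α ^ 2 - 1) = s ^ 2 / α ^ 2 by ring] at hb
    have h2 : (s ^ 2 / α ^ 2 : ℝ) ^ ((r+1)/2 : ℝ) = s ^ (r+1) / α ^ (r+1) := by
      rw [Real.div_rpow (sq_nonneg s) (sq_nonneg α), hsq s hs0.le, hsq α hα.le]
    rw [h2] at hb
    have hα1 : 0 < α ^ (r+1) := Real.rpow_pos_of_pos hα _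
    have key' : (1 + (r+1)/2 * (s ^ 2 / α ^ 2 - 1)) * α ^ (r+1) ≤ s ^ (r+1) :=
      (le_div_iff₀ hα1).mp hb
    have hsplit : α ^ (r+1) = α ^ (r-1) * α ^ 2 := hexp α hα
    have keyfin : α ^ (r+1) + (r+1)/2 * α ^ (r-1) * (s ^ 2 - α ^ 2) ≤ s ^ (r+1) := by
      have heq : α ^ (r+1) + (r+1)/2 * α ^ (r-1) * (s ^ 2 - α ^ 2)
          = (1 + (r+1)/2 * (s ^ 2 / α ^ 2 - 1)) * α ^ (r+1) := by
        rw [hsplit]; field_simp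
      linarith [heq ▸ key']
    have hA4 : 4 * lam ≤ κ ^ 2 * α ^ (r-1) := by
      have := (div_le_iff₀ hκ2).mp hαpow
      linarith [this]
    have step1 : κ ^ 2 / (2 + 2*r) * ((r+1)/2 * α ^ (r-1) * (s ^ 2 - α ^ 2))
        ≤ κ ^ 2 / (2 + 2*r) * (s ^ (r+1) - α ^ (r+1)) :=
      mul_le_mul_of_nonneg_left (by linarith) (div_pos hκ2 hden).le
    have step2 : κ ^ 2 / (2 + 2*r) * ((r+1)/2 * α ^ (r-1) * (s ^ 2 - α ^ 2))
        = κ ^ 2 * α ^ (r-1) * (s ^ 2 - α ^ 2) / 4 := by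
      field_simp; ring
    have step3 : lam * (s ^ 2 - α ^ 2) ≤ κ ^ 2 * α ^ (r-1) * (s ^ 2 - α ^ 2) / 4 := by
      nlinarith [hA4, hs2]
    simp only [hgdef]
    linarith [step2 ▸ step1]
  have hgpos : ∀ s ∈ Ici α, 0 < g s := fun s hs =>
    lt_of_lt_of_le (by positivity) (hg s hs)
  -- continuity
  have hgc : ContinuousOn g (Ici α) := by
    apply ContinuousOn.add
    · exact (continuous_const.sub (continuous_const.mul (continuous_pow 2))).continuousOn
    · apply ContinuousOn.mul continuousOn_const
      apply ContinuousOn.sub _ continuousOn_const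
      intro x hx
      exact (Real.continuousAt_rpow_const x (r+1)
        (Or.inl (lt_of_lt_of_le hα hx).ne')).continuousWithinAt
  have hfc : ContinuousOn (fun s : ℝ => g s ^ (-(1/2) : ℝ)) (Ici α) :=
    hgc.rpow_const (fun x hx => Or.inl (hgpos x hx).ne')
  -- the splitting point
  set M : ℝ := max (2*α) ((2*lam*(2+2*r)/κ^2) ^ ((1:ℝ)/(r-1))) with hMdef
  have hαM : α ≤ M := le_trans (by linarith) (le_max_left _ _)
  have hM0 : 0 < M := lt_of_lt_of_le hα hαM
  -- part 1 : Ioc α M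
  have int1 : IntegrableOn (fun s : ℝ => g s ^ (-(1/2) : ℝ)) (Ioc α M) := by
    have h9 : IntegrableOn (fun s : ℝ => g s ^ (-(1/2) : ℝ)) (Icc α M) volume :=
      ContinuousOn.integrableOn_Icc (hfc.mono Icc_subset_Ici_self)
    exact h9.mono_set Ioc_subset_Icc_self
  -- part 2 : Ioi M, tail bound
  have hc1 : (0:ℝ) < κ ^ 2 / (2 + 2*r) / 4 := by positivity
  have htail : ∀ s ∈ Ioi M, κ ^ 2 / (2 + 2*r) / 4 * s ^ (r+1) ≤ g s := by
    intro s hs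
    have hsM : M ≤ s := (le_of_lt hs)
    have hs0 : 0 < s := lt_of_lt_of_le hM0 hsM
    have hs2α : 2*α ≤ s := le_trans (le_max_left _ _) hsM
    have hX2 : (0:ℝ) < 2*lam*(2+2*r)/κ^2 := by positivity
    have hb2 : 2*lam*(2+2*r)/κ^2 ≤ s ^ (r-1) :=
      hrpow_collapse _ hX2 s hs0.le (le_trans (le_max_right _ _) hsM)
    -- 4 α^{r+1} ≤ s^{r+1}
    have hb1 : 4 * α ^ (r+1) ≤ s ^ (r+1) := by
      have h2a : ((2:ℝ)*α) ^ (r+1) ≤ s ^ (r+1) :=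
        Real.rpow_le_rpow (by linarith) hs2α (by linarith)
      have hmul : ((2:ℝ)*α) ^ (r+1) = (2:ℝ) ^ (r+1) * α ^ (r+1) :=
        Real.mul_rpow (by norm_num) hα.le
      have h4 : (4:ℝ) ≤ (2:ℝ) ^ (r+1) := by
        have := Real.rpow_le_rpow_of_exponent_le (x := 2) one_le_two
          (y := 2) (z := r+1) (by linarith)
        rwa [show ((2:ℝ):ℝ) ^ (2:ℝ) = 4 by
          rw [show (2:ℝ) = ((2:ℕ):ℝ) by norm_num, Real.rpow_natCast]; norm_num] at this
      have hα1 : (0:ℝ) ≤ α ^ (r+1) := (Real.rpow_pos_of_pos hα _).le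
      nlinarith [h2a, hmul, h4, hα1]
    -- lam s² ≤ (κ²/(2+2r)/2) s^{r+1}
    have h5 : lam * s ^ 2 ≤ κ ^ 2 / (2 + 2*r) / 2 * s ^ (r+1) := by
      have h6 : 2*lam*(2+2*r)/κ^2 * s ^ 2 ≤ s ^ (r-1) * s ^ 2 :=
        mul_le_mul_of_nonneg_right hb2 (sq_nonneg s)
      have h7 : κ ^ 2 / (2 + 2*r) / 2 * (2*lam*(2+2*r)/κ^2 * s ^ 2)
          ≤ κ ^ 2 / (2 + 2*r) / 2 * (s ^ (r-1) * s ^ 2) :=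
        mul_le_mul_of_nonneg_left h6 (by positivity)
      have h8 : κ ^ 2 / (2 + 2*r) / 2 * (2*lam*(2+2*r)/κ^2 * s ^ 2) = lam * s ^ 2 := by
        field_simp
      rw [hexp s hs0]
      linarith [h8 ▸ h7]
    have hc1' : (0:ℝ) ≤ κ ^ 2 / (2 + 2*r) := (div_pos hκ2 hden).le
    have hb1' : κ ^ 2 / (2 + 2*r) * α ^ (r+1) ≤ κ ^ 2 / (2 + 2*r) / 4 * s ^ (r+1) := by
      have := mul_le_mul_of_nonneg_left hb1
        (by positivity : (0:ℝ) ≤ κ ^ 2 / (2 + 2*r) / 4)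
      linarith [this]
    have hβα : (0:ℝ) ≤ lam * α ^ 2 + β ^ 2 := by positivity
    show _ ≤ lam * α ^ 2 + β ^ 2 - lam * s ^ 2
        + κ ^ 2 / (2 + 2 * r) * (s ^ (r + 1) - α ^ (r + 1))
    have hdist : κ ^ 2 / (2 + 2*r) * (s ^ (r+1) - α ^ (r+1))
        = κ ^ 2 / (2 + 2*r) * s ^ (r+1) - κ ^ 2 / (2 + 2*r) * α ^ (r+1) := by ring
    rw [hdist]
    linarith [hb1', h5]
  -- dominating function on Ioi M
  have hplt : (r+1) * (-(1/2) : ℝ) < -1 := by linarith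
  have hdom : IntegrableOn
      (fun s : ℝ => (κ ^ 2 / (2 + 2*r) / 4) ^ (-(1/2):ℝ) * s ^ ((r+1) * (-(1/2):ℝ)))
      (Ioi M) :=
    (integrableOn_Ioi_rpow_of_lt hplt hM0).const_mul _
  have int2 : IntegrableOn (fun s : ℝ => g s ^ (-(1/2) : ℝ)) (Ioi M) := by
    apply Integrable.mono' hdom
    · exact ((hfc.mono (fun x (hx : x ∈ Ioi M) => le_trans hαM (le_of_lt hx))).aestronglyMeasurable
        measurableSet_Ioi)
    · refine (ae_restrict_iff' measurableSet_Ioi).mpr (Filter.Eventually.of_forall ?_)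
      intro s hs
      have hs0 : 0 < s := lt_of_lt_of_le hM0 (le_of_lt hs)
      have hgs : 0 < g s := hgpos s (le_trans hαM (le_of_lt hs))
      have hcs : 0 < κ ^ 2 / (2 + 2*r) / 4 * s ^ (r+1) := by
        have := Real.rpow_pos_of_pos hs0 (r+1); positivity
      have hle : g s ^ (-(1/2):ℝ) ≤ (κ ^ 2 / (2 + 2*r) / 4 * s ^ (r+1)) ^ (-(1/2):ℝ) :=
        Real.rpow_le_rpow_of_nonpos hcs (htail s hs) (by norm_num)
      have heqd : (κ ^ 2 / (2 + 2*r) / 4 * s ^ (r+1)) ^ (-(1/2):ℝ)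
          = (κ ^ 2 / (2 + 2*r) / 4) ^ (-(1/2):ℝ) * s ^ ((r+1) * (-(1/2):ℝ)) := by
        rw [Real.mul_rpow hc1.le (Real.rpow_pos_of_pos hs0 _).le,
          ← Real.rpow_mul hs0.le]
      rw [Real.norm_eq_abs, abs_of_nonneg (Real.rpow_nonneg hgs.le _)]
      calc g s ^ (-(1/2):ℝ) ≤ _ := hle
        _ = _ := heqd
  have := int1.union int2
  rwa [Ioc_union_Ioi_eq_Ioi hαM] at this
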